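/- Let 𝒳 be a fundamental minimal system for 𝕏 that is bounded-oscillation unconditional with function Φ and is also C-superdemocratic for some C ≥ 1. Then the bidual system of 𝒳 is C·Φ(1)-superdemocratic; explicitly, for all finite A, B ⊆ ℕ with |B| ≤ |A| and all scalars (ε'_n)_{n∈B}, (ε_n)_{n∈A} with |ε'_n| = |ε_n| = 1, one has sup{|f*(Σ_{n∈B} ε'_n x_n)| : f* ∈ ⟨𝒳*⟩, ‖f*‖ ≤ 1} ≤ C·Φ(1) · sup{|f*(Σ_{n∈A} ε_n x_n)| : f* ∈ ⟨𝒳*⟩, ‖f*‖ ≤ 1}. -/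

import Mathlib

/-- If `𝒳` is bounded-oscillation unconditional with function `Φ` and
`C`-superdemocratic, then the bidual system of `𝒳` is `C·Φ(1)`-superdemocratic: for all finite
`A, B ⊆ ℕ` with `|B| ≤ |A|` and unimodular scalars `ε', ε`,
`sup{|f*(Σ_{n∈B} ε'_n x_n)| : f* ∈ ⟨𝒳*⟩, ‖f*‖ ≤ 1} ≤
  C·Φ(1) · sup{|f*(Σ_{n∈A} ε_n x_n)| : f* ∈ ⟨𝒳*⟩, ‖f*‖ ≤ 1}`. -/
theorem bou_superdemocratic_passes_to_bidual
    {𝕜 : Type*} [RCLike 𝕜] {X : Type*} [NormedAddCommGroup X] [NormedSpace 𝕜 X]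
    [CompleteSpace X] [TopologicalSpace.SeparableSpace X]
    (hinf : ¬ FiniteDimensional 𝕜 X)
    (x : ℕ → X) (xs : ℕ → X →L[𝕜] 𝕜)
    (hdense : Dense (Submodule.span 𝕜 (Set.range x) : Set X))
    (hbi : ∀ n k, xs n (x k) = if n = k then 1 else 0)
    (Φ : ℝ → ℝ)
    (hBOU : ∀ (f : X) (t : ℝ), 0 < t → t ≤ 1 → ∀ A : Finset ℕ,
      (∀ n ∈ A, ∀ k ∈ A, xs k f ≠ 0 → t * ‖xs n f‖ ≤ ‖xs k f‖) →
      ‖∑ n ∈ A, xs n f • x n‖ ≤ Φ t * ‖f‖)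
    (C : ℝ) (hC : 1 ≤ C)
    (hSD : ∀ (A B : Finset ℕ), B.card ≤ A.card → ∀ ε' ε : ℕ → 𝕜,
      (∀ n ∈ B, ‖ε' n‖ = 1) → (∀ n ∈ A, ‖ε n‖ = 1) →
      ‖∑ n ∈ B, ε' n • x n‖ ≤ C * ‖∑ n ∈ A, ε n • x n‖) :
    ∀ (A B : Finset ℕ), B.card ≤ A.card → ∀ ε' ε : ℕ → 𝕜,
      (∀ n ∈ B, ‖ε' n‖ = 1) → (∀ n ∈ A, ‖ε n‖ = 1) →
      sSup {r : ℝ | ∃ g ∈ Submodule.span 𝕜 (Set.range xs), ‖g‖ ≤ 1 ∧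
          r = ‖g (∑ n ∈ B, ε' n • x n)‖} ≤ C * Φ 1 *
        sSup {r : ℝ | ∃ g ∈ Submodule.span 𝕜 (Set.range xs), ‖g‖ ≤ 1 ∧
          r = ‖g (∑ n ∈ A, ε n • x n)‖} := by
  classical
  intro A B hcard ε' ε hε' hε
  set fB := ∑ n ∈ B, ε' n • x n with hfB
  set fA := ∑ n ∈ A, ε n • x n with hfA
  -- x 0 ≠ 0
  have hx0 : x 0 ≠ 0 := by
    intro h
    have := hbi 0 0
    simp [h] at this
  -- Φ 1 ≥ 1
  have h00 : xs 0 (x 0) = 1 := by rw [hbi]; simp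
  have hΦ1 : 1 ≤ Φ 1 := by
    have h := hBOU (x 0) 1 one_pos le_rfl {0} (by
      intro n hn k hk _
      simp only [Finset.mem_singleton] at hn hk
      subst hn; subst hk; simp)
    rw [Finset.sum_singleton, h00, one_smul] at h
    exact (le_mul_iff_one_le_left (norm_pos_iff.mpr hx0)).mp h
  have hΦ0 : (0:ℝ) < Φ 1 := lt_of_lt_of_le one_pos hΦ1
  -- coefficients of fA
  have hcoefA : ∀ k ∈ A, xs k fA = ε k := by
    intro k hk
    have h1 : xs k fA = ∑ n ∈ A, (if k = n then ε n else 0) := by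
      rw [hfA, map_sum]
      refine Finset.sum_congr rfl (fun n _ => ?_)
      rw [map_smul, smul_eq_mul, hbi k n]
      split <;> simp
    rw [h1, Finset.sum_ite_eq A k ε, if_pos hk]
  -- BOU applied to any vector with coefficients ε on A
  have hBOUA : ∀ v : X, (∀ k ∈ A, xs k v = ε k) → ‖fA‖ ≤ Φ 1 * ‖v‖ := by
    intro v hv
    have h := hBOU v 1 one_pos le_rfl A (by
      intro n hn k hk _
      rw [one_mul, hv n hn, hv k hk, hε n hn, hε k hk])
    have heq : (∑ n ∈ A, xs n v • x n) = fA := by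
      rw [hfA]
      exact Finset.sum_congr rfl (fun n hn => by rw [hv n hn])
    rwa [heq] at h
  -- the right-hand sup set
  set SA := {r : ℝ | ∃ g ∈ Submodule.span 𝕜 (Set.range xs), ‖g‖ ≤ 1 ∧ r = ‖g fA‖} with hSA
  have hSAbdd : BddAbove SA := by
    refine ⟨‖fA‖, ?_⟩
    rintro r ⟨g, _, hg1, rfl⟩
    exact (g.le_opNorm fA).trans (by
      have := norm_nonneg fA
      nlinarith)
  have hSAnon : (0:ℝ) ≤ sSup SA := by
    apply Real.sSup_nonneg
    rintro r ⟨g, _, _, rfl⟩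
    exact norm_nonneg _
  -- key: ‖fA‖ ≤ Φ 1 * sSup SA
  have hkey : ‖fA‖ ≤ Φ 1 * sSup SA := by
    rcases A.eq_empty_or_nonempty with rfl | ⟨k0, hk0⟩
    · simp only [hfA, Finset.sum_empty, norm_zero]
      positivity
    · -- fA ≠ 0
      have hfAne : fA ≠ 0 := by
        intro h
        have h1 := hcoefA k0 hk0
        rw [h, map_zero] at h1
        have h2 := hε k0 hk0
        rw [← h1] at h2
        simp at h2
      -- the projection P_A
      set PA : X →L[𝕜] X := ∑ n ∈ A, (xs n).smulRight (x n) with hPAdef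
      have hPAapp : ∀ v : X, PA v = ∑ n ∈ A, xs n v • x n := by
        intro v
        simp [hPAdef, ContinuousLinearMap.sum_apply]
      have hPAcoef : ∀ v : X, ∀ k ∈ A, xs k (PA v) = xs k v := by
        intro v k hk
        have h1 : xs k (PA v) = ∑ n ∈ A, (if k = n then xs n v else 0) := by
          rw [hPAapp, map_sum]
          refine Finset.sum_congr rfl (fun n _ => ?_)
          rw [map_smul, smul_eq_mul, hbi k n]
          split <;> simp
        rw [h1, Finset.sum_ite_eq A k (fun n => xs n v), if_pos hk]
      have hPAidem : ∀ v : X, PA (PA v) = PA v := by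
        intro v
        conv_lhs => rw [hPAapp (PA v)]
        conv_rhs => rw [hPAapp v]
        exact Finset.sum_congr rfl (fun n hn => by rw [hPAcoef v n hn])
      set K : Submodule 𝕜 X := LinearMap.ker (PA : X →ₗ[𝕜] X) with hK
      haveI hKcl : IsClosed (K : Set X) := ContinuousLinearMap.isClosed_ker PA
      -- quotient map as CLM
      set π : X →L[𝕜] (X ⧸ K) := LinearMap.mkContinuous K.mkQ 1 (fun v => by
        simpa using Submodule.Quotient.norm_mk_le K v) with hπ
      have hπapp : ∀ v : X, π v = Submodule.Quotient.mk v := fun v => rfl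
      -- coefficient identification in the fiber over mk fA
      have hfiber : ∀ v : X, (Submodule.Quotient.mk v : X ⧸ K) = Submodule.Quotient.mk fA →
          ∀ k ∈ A, xs k v = ε k := by
        intro v hv k hk
        have hmem : v - fA ∈ K := (Submodule.Quotient.eq K).mp hv
        have hPAeq : PA v = PA fA := by
          have := LinearMap.mem_ker.mp hmem
          rw [map_sub] at this
          exact sub_eq_zero.mp this
        have := hPAcoef v k hk
        rw [hPAeq, hPAcoef fA k hk, hcoefA k hk] at this
        exact this.symm
      -- ‖fA‖ ≤ Φ 1 * ‖mk fA‖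
      have hquot : ‖fA‖ ≤ Φ 1 * ‖(Submodule.Quotient.mk fA : X ⧸ K)‖ := by
        apply le_of_forall_pos_le_add
        intro δ hδ
        obtain ⟨v, hv, hvn⟩ := Submodule.Quotient.norm_mk_lt
          (Submodule.Quotient.mk fA : X ⧸ K) (div_pos hδ hΦ0)
        have h1 := hBOUA v (hfiber v hv)
        have h2 : Φ 1 * ‖v‖ ≤ Φ 1 * (‖(Submodule.Quotient.mk fA : X ⧸ K)‖ + δ / Φ 1) :=
          mul_le_mul_of_nonneg_left hvn.le hΦ0.le
        have h3 : Φ 1 * (δ / Φ 1) = δ := by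
          rw [mul_comm]; exact div_mul_cancel₀ δ (ne_of_gt hΦ0)
        rw [mul_add, h3] at h2
        exact h1.trans h2
      -- mk fA ≠ 0
      have hmkne : (Submodule.Quotient.mk fA : X ⧸ K) ≠ 0 := by
        intro hz
        have hmem : fA ∈ K := (Submodule.Quotient.mk_eq_zero K).mp hz
        have h0 : PA fA = 0 := LinearMap.mem_ker.mp hmem
        have := hPAcoef fA k0 hk0
        rw [h0, map_zero, hcoefA k0 hk0] at this
        have h2 := hε k0 hk0
        rw [← this] at h2
        simp at h2
      obtain ⟨ψ, hψ1, hψfA⟩ := exists_dual_vector 𝕜 (Submodule.Quotient.mk fA : X ⧸ K) (norm_ne_zero_iff.mpr hmkne)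
      set g : X →L[𝕜] 𝕜 := ψ.comp π with hg
      have hgnorm : ‖g‖ ≤ 1 := by
        refine (ψ.opNorm_comp_le π).trans ?_
        rw [hψ1, one_mul]
        exact LinearMap.mkContinuous_norm_le _ zero_le_one _
      have hgval : ‖g fA‖ = ‖(Submodule.Quotient.mk fA : X ⧸ K)‖ := by
        rw [hg]
        simp only [ContinuousLinearMap.comp_apply, hπapp, hψfA]
        rw [RCLike.norm_ofReal, abs_of_nonneg (norm_nonneg _)]
      have hgmem : g ∈ Submodule.span 𝕜 (Set.range xs) := by
        have hrepr : g = ∑ n ∈ A, ψ (Submodule.Quotient.mk (x n)) • xs n := by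
          ext h
          have hker : h - PA h ∈ K := by
            rw [hK, LinearMap.mem_ker, ContinuousLinearMap.coe_coe, map_sub, hPAidem, sub_self]
          have hmk : (Submodule.Quotient.mk h : X ⧸ K) = Submodule.Quotient.mk (PA h) :=
            (Submodule.Quotient.eq K).mpr (by simpa using hker)
          have : g h = ψ (Submodule.Quotient.mk (PA h)) := by
            rw [hg]; simp only [ContinuousLinearMap.comp_apply, hπapp]; rw [hmk]
          rw [this, hPAapp]
          have : (Submodule.Quotient.mk (∑ n ∈ A, xs n h • x n) : X ⧸ K) =
              ∑ n ∈ A, xs n h • Submodule.Quotient.mk (x n) := by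
            rw [← Submodule.mkQ_apply, map_sum]
            simp only [map_smul, Submodule.mkQ_apply]
          rw [this, map_sum]
          simp only [map_smul, smul_eq_mul]
          rw [ContinuousLinearMap.sum_apply]
          simp only [ContinuousLinearMap.smul_apply, smul_eq_mul]
          exact Finset.sum_congr rfl (fun n _ => mul_comm _ _)
        rw [hrepr]
        exact Submodule.sum_mem _ (fun n _ =>
          Submodule.smul_mem _ _ (Submodule.subset_span ⟨n, rfl⟩))
      have hmem : ‖g fA‖ ∈ SA := ⟨g, hgmem, hgnorm, rfl⟩
      have hle : ‖(Submodule.Quotient.mk fA : X ⧸ K)‖ ≤ sSup SA := by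
        rw [← hgval]
        exact le_csSup hSAbdd hmem
      exact hquot.trans (mul_le_mul_of_nonneg_left hle hΦ0.le)
  -- assemble
  apply Real.sSup_le
  · rintro r ⟨g, _, hg1, rfl⟩
    have h1 : ‖g fB‖ ≤ ‖fB‖ :=
      (g.le_opNorm fB).trans (mul_le_of_le_one_left (norm_nonneg fB) hg1)
    have h2 : ‖fB‖ ≤ C * ‖fA‖ := hSD A B hcard ε' ε hε' hε
    have h3 : C * ‖fA‖ ≤ C * (Φ 1 * sSup SA) :=
      mul_le_mul_of_nonneg_left hkey (le_trans zero_le_one hC)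
    calc ‖g fB‖ ≤ C * ‖fA‖ := h1.trans h2
      _ ≤ C * Φ 1 * sSup SA := by rw [mul_assoc]; exact h3
  · positivity
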